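/- With T_{n} ⊙_k as the star with n leaves grafted to a path of k vertices at its center, for all positive integers n and k: 𝒢(T_{2n−1} ⊙_k) = 𝒢(T_{1} ⊙_k) = 𝒢(P_{k+2}) and 𝒢(T_{2n} ⊙_k) = 𝒢(T_{2} ⊙_k), where P_m is the path on m vertices and 𝒢 is the Node-Kayles Grundy value. -/

import Mathlib

/-- The minimum excluded value of a finite set of naturals. -/
noncomputable def mex (s : Finset ℕ) : ℕ := sInf {n : ℕ | n ∉ s}

/-- Node-Kayles Grundy value of the position given by the induced subgraph of `G`
on the finite vertex set `s`: a move picks a vertex `v ∈ s` and removes its closed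
neighborhood, and the Grundy value is the mex of the Grundy values of the options.
(For a disconnected position this agrees with the nim-sum of the components'
Grundy values, by the Sprague–Grundy theory.) -/
noncomputable def nkGrundy {V : Type*} [DecidableEq V] (G : SimpleGraph V) [DecidableRel G.Adj]
    (s : Finset V) : ℕ :=
  mex (s.attach.image fun v =>
    nkGrundy G ((s.erase v.1).filter fun w => ¬ G.Adj v.1 w))
termination_by s.card
decreasing_by
  exact lt_of_le_of_lt (Finset.card_filter_le _ _) (Finset.card_erase_lt_of_mem v.2)

instance {V : Type*} (r : V → V → Prop) [DecidableEq V] [DecidableRel r] :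
    DecidableRel (SimpleGraph.fromRel r).Adj :=
  fun a b => decidable_of_iff _ (SimpleGraph.fromRel_adj r a b).symm

/-- The star with `n` leaves together with a tail path of `k` extra vertices
attached to its center: center `0`, leaves `1, …, n`, path vertices
`n+1, …, n+k` (the center is joined to `n+1`).  Its vertex set is
`{0, …, n+k}`.  This is the graph `T_{n} ⊙_k`. -/
def starTail (n k : ℕ) : SimpleGraph ℕ :=
  SimpleGraph.fromRel (fun a b =>
    (a = 0 ∧ 1 ≤ b ∧ b ≤ n) ∨
    (a = 0 ∧ b = n + 1 ∧ 1 ≤ k) ∨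
    (n + 1 ≤ a ∧ a < n + k ∧ b = a + 1))

instance (n k : ℕ) : DecidableRel (starTail n k).Adj :=
  fun a b => decidable_of_iff _ (SimpleGraph.fromRel_adj _ a b).symm

/-- The path graph on ℕ: `i` adjacent to `i+1`; the path `P m` on `m` vertices
is its induced subgraph on `{0, …, m-1}`. -/
def pathGraph : SimpleGraph ℕ := SimpleGraph.fromRel (fun a b => a + 1 = b)

instance : DecidableRel pathGraph.Adj :=
  fun a b => decidable_of_iff _ (SimpleGraph.fromRel_adj _ a b).symm

lemma mex_notMem (s : Finset ℕ) : mex s ∉ s :=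
  Nat.sInf_mem (Set.Infinite.nonempty (Set.Finite.infinite_compl s.finite_toSet))

lemma mem_of_lt_mex {s : Finset ℕ} {m : ℕ} (h : m < mex s) : m ∈ s := by
  by_contra hm
  exact absurd (Nat.sInf_le hm) (not_le.mpr h)

lemma mex_eq {s : Finset ℕ} {g : ℕ} (h1 : g ∉ s) (h2 : ∀ m < g, m ∈ s) : mex s = g := by
  refine le_antisymm (Nat.sInf_le h1) (le_of_not_gt fun h => ?_)
  exact mex_notMem s (h2 _ h)

/-- The position reached from `s` by moving at `v`. -/
def nkMove {V : Type*} [DecidableEq V] (G : SimpleGraph V) [DecidableRel G.Adj]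
    (s : Finset V) (v : V) : Finset V :=
  (s.erase v).filter fun w => ¬ G.Adj v w

lemma nkGrundy_eq {V : Type*} [DecidableEq V] (G : SimpleGraph V) [DecidableRel G.Adj]
    (s : Finset V) :
    nkGrundy G s = mex (s.image fun v => nkGrundy G (nkMove G s v)) := by
  rw [nkGrundy]
  congr 1
  ext x
  simp only [Finset.mem_image, Finset.mem_attach, true_and, Subtype.exists, nkMove]
  tauto

lemma mem_nkMove {V : Type*} [DecidableEq V] (G : SimpleGraph V) [DecidableRel G.Adj]
    {s : Finset V} {v w : V} :
    w ∈ nkMove G s v ↔ w ∈ s ∧ w ≠ v ∧ ¬ G.Adj v w := by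
  simp [nkMove, Finset.mem_filter, Finset.mem_erase, and_comm, and_assoc]
  tauto
section transfer
variable {V W : Type*} [DecidableEq V] [DecidableEq W]
  (G : SimpleGraph V) [DecidableRel G.Adj] (H : SimpleGraph W) [DecidableRel H.Adj]

lemma nkMove_image (f : V → W) {s : Finset V} (hinj : Set.InjOn f s)
    (hadj : ∀ a ∈ s, ∀ b ∈ s, G.Adj a b ↔ H.Adj (f a) (f b)) {v : V} (hv : v ∈ s) :
    (nkMove G s v).image f = nkMove H (s.image f) (f v) := by
  ext y
  simp only [Finset.mem_image, mem_nkMove]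
  constructor
  · rintro ⟨x, ⟨hx, hxv, hna⟩, rfl⟩
    exact ⟨⟨x, hx, rfl⟩, fun h => hxv (hinj hx hv h), fun h => hna ((hadj v hv x hx).mpr h)⟩
  · rintro ⟨⟨x, hx, rfl⟩, hxv, hna⟩
    exact ⟨x, ⟨hx, fun h => hxv (by rw [h]), fun h => hna ((hadj v hv x hx).mp h)⟩, rfl⟩

lemma nkGrundy_map_aux (f : V → W) :
    ∀ N (s : Finset V), s.card ≤ N → Set.InjOn f s →
      (∀ a ∈ s, ∀ b ∈ s, G.Adj a b ↔ H.Adj (f a) (f b)) →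
      nkGrundy G s = nkGrundy H (s.image f) := by
  intro N
  induction N with
  | zero =>
    intro s hs _ _
    rw [Nat.le_zero, Finset.card_eq_zero] at hs
    subst hs
    rw [nkGrundy_eq, nkGrundy_eq]
    simp
  | succ N ih =>
    intro s hs hinj hadj
    rw [nkGrundy_eq, nkGrundy_eq]
    congr 1
    ext x
    simp only [Finset.mem_image]
    constructor
    · rintro ⟨v, hv, rfl⟩
      refine ⟨f v, ⟨v, hv, rfl⟩, ?_⟩
      rw [← nkMove_image G H f hinj hadj hv]
      refine (ih (nkMove G s v) ?_ ?_ ?_).symm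
      · have h1 : (nkMove G s v).card < s.card :=
          lt_of_le_of_lt (Finset.card_filter_le _ _) (Finset.card_erase_lt_of_mem hv)
        omega
      · exact hinj.mono (fun y hy => (mem_nkMove G).mp hy |>.1)
      · intro a ha b hb
        exact hadj a ((mem_nkMove G).mp ha).1 b ((mem_nkMove G).mp hb).1
    · rintro ⟨w, ⟨v, hv, rfl⟩, rfl⟩
      refine ⟨v, hv, ?_⟩
      rw [← nkMove_image G H f hinj hadj hv]
      refine ih (nkMove G s v) ?_ ?_ ?_
      · have h1 : (nkMove G s v).card < s.card :=
          lt_of_le_of_lt (Finset.card_filter_le _ _) (Finset.card_erase_lt_of_mem hv)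
        omega
      · exact hinj.mono (fun y hy => (mem_nkMove G).mp hy |>.1)
      · intro a ha b hb
        exact hadj a ((mem_nkMove G).mp ha).1 b ((mem_nkMove G).mp hb).1

lemma nkGrundy_map (f : V → W) (s : Finset V) (hinj : Set.InjOn f s)
    (hadj : ∀ a ∈ s, ∀ b ∈ s, G.Adj a b ↔ H.Adj (f a) (f b)) :
    nkGrundy G s = nkGrundy H (s.image f) :=
  nkGrundy_map_aux G H f s.card s le_rfl hinj hadj

end transfer
section union
variable {V : Type*} [DecidableEq V] (G : SimpleGraph V) [DecidableRel G.Adj]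

lemma nkMove_union_left {s t : Finset V} (hd : Disjoint s t)
    (h : ∀ a ∈ s, ∀ b ∈ t, ¬ G.Adj a b) {v : V} (hv : v ∈ s) :
    nkMove G (s ∪ t) v = nkMove G s v ∪ t := by
  ext w
  simp only [mem_nkMove, Finset.mem_union]
  constructor
  · rintro ⟨hw | hw, hwv, hna⟩
    · exact Or.inl ⟨hw, hwv, hna⟩
    · exact Or.inr hw
  · rintro (⟨hw, hwv, hna⟩ | hw)
    · exact ⟨Or.inl hw, hwv, hna⟩
    · exact ⟨Or.inr hw, fun hh => (Finset.disjoint_left.mp hd hv) (hh ▸ hw),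
        h v hv w hw⟩

lemma nkGrundy_union_aux :
    ∀ N (s t : Finset V), (s ∪ t).card ≤ N → Disjoint s t →
      (∀ a ∈ s, ∀ b ∈ t, ¬ G.Adj a b) →
      nkGrundy G (s ∪ t) = nkGrundy G s ^^^ nkGrundy G t := by
  intro N
  induction N with
  | zero =>
    intro s t hc hd h
    rw [Nat.le_zero, Finset.card_eq_zero, Finset.union_eq_empty] at hc
    obtain ⟨rfl, rfl⟩ := hc
    simp only [Finset.union_idempotent]
    rw [nkGrundy_eq]
    simp [mex]
  | succ N ih =>
    intro s t hc hd h
    have hmv : ∀ v ∈ s, nkGrundy G (nkMove G (s ∪ t) v)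
        = nkGrundy G (nkMove G s v) ^^^ nkGrundy G t := by
      intro v hv
      rw [nkMove_union_left G hd h hv]
      have hsub : nkMove G s v ∪ t ⊆ (s ∪ t).erase v := by
        intro w hw
        rw [Finset.mem_erase]
        rcases Finset.mem_union.mp hw with hw | hw
        · obtain ⟨hw1, hw2, _⟩ := (mem_nkMove G).mp hw
          exact ⟨hw2, Finset.mem_union_left _ hw1⟩
        · exact ⟨fun hh => (Finset.disjoint_left.mp hd hv) (hh ▸ hw),
            Finset.mem_union_right _ hw⟩
      refine ih _ _ ?_ ?_ ?_
      · have := Finset.card_le_card hsub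
        have := Finset.card_erase_lt_of_mem (Finset.mem_union_left t hv)
        omega
      · exact hd.mono_left (Finset.filter_subset _ _ |>.trans (Finset.erase_subset _ _))
      · intro a ha b hb
        exact h a ((mem_nkMove G).mp ha).1 b hb
    have hmw : ∀ v ∈ t, nkGrundy G (nkMove G (s ∪ t) v)
        = nkGrundy G s ^^^ nkGrundy G (nkMove G t v) := by
      intro v hv
      have hcomm : s ∪ t = t ∪ s := Finset.union_comm s t
      have h' : ∀ a ∈ t, ∀ b ∈ s, ¬ G.Adj a b := fun a ha b hb hadj =>
        h b hb a ha hadj.symm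
      rw [hcomm, nkMove_union_left G hd.symm h' hv]
      have hsub : nkMove G t v ∪ s ⊆ (t ∪ s).erase v := by
        intro w hw
        rw [Finset.mem_erase]
        rcases Finset.mem_union.mp hw with hw | hw
        · obtain ⟨hw1, hw2, _⟩ := (mem_nkMove G).mp hw
          exact ⟨hw2, Finset.mem_union_left _ hw1⟩
        · exact ⟨fun hh => (Finset.disjoint_left.mp hd.symm hv) (hh ▸ hw),
            Finset.mem_union_right _ hw⟩
      rw [Nat.xor_comm]
      refine ih _ _ ?_ ?_ ?_
      · have := Finset.card_le_card hsub
        have := Finset.card_erase_lt_of_mem (Finset.mem_union_left s hv)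
        rw [hcomm] at hc
        omega
      · exact hd.symm.mono_left (Finset.filter_subset _ _ |>.trans (Finset.erase_subset _ _))
      · intro a ha b hb
        exact h' a ((mem_nkMove G).mp ha).1 b hb
    rw [nkGrundy_eq]
    apply mex_eq
    · -- the value a ^^^ b is not an option
      intro hmem
      obtain ⟨v, hv, hval⟩ := Finset.mem_image.mp hmem
      rcases Finset.mem_union.mp hv with hvs | hvt
      · rw [hmv v hvs] at hval
        have : nkGrundy G (nkMove G s v) = nkGrundy G s := by
          have := congrArg (· ^^^ nkGrundy G t) hval
          simpa [Nat.xor_assoc] using this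
        have hopt : nkGrundy G (nkMove G s v) ∈
            s.image fun v => nkGrundy G (nkMove G s v) :=
          Finset.mem_image_of_mem _ hvs
        rw [this] at hopt
        rw [nkGrundy_eq G s] at hopt
        exact mex_notMem _ hopt
      · rw [hmw v hvt] at hval
        have : nkGrundy G (nkMove G t v) = nkGrundy G t := by
          have := congrArg (nkGrundy G s ^^^ ·) hval
          simpa [← Nat.xor_assoc] using this
        have hopt : nkGrundy G (nkMove G t v) ∈
            t.image fun v => nkGrundy G (nkMove G t v) :=
          Finset.mem_image_of_mem _ hvt
        rw [this] at hopt
        rw [nkGrundy_eq G t] at hopt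
        exact mex_notMem _ hopt
    · intro m hm
      rcases Nat.lt_xor_cases hm with hlt | hlt
      · have : m ^^^ nkGrundy G t ∈ s.image fun v => nkGrundy G (nkMove G s v) := by
          apply mem_of_lt_mex
          rw [← nkGrundy_eq]
          exact hlt
        obtain ⟨v, hv, hval⟩ := Finset.mem_image.mp this
        refine Finset.mem_image.mpr ⟨v, Finset.mem_union_left _ hv, ?_⟩
        rw [hmv v hv, hval]
        simp [Nat.xor_assoc]
      · have : m ^^^ nkGrundy G s ∈ t.image fun v => nkGrundy G (nkMove G t v) := by
          apply mem_of_lt_mex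
          rw [← nkGrundy_eq]
          exact hlt
        obtain ⟨v, hv, hval⟩ := Finset.mem_image.mp this
        refine Finset.mem_image.mpr ⟨v, Finset.mem_union_right _ hv, ?_⟩
        rw [hmw v hv, hval, Nat.xor_comm m (nkGrundy G s), ← Nat.xor_assoc,
          Nat.xor_self, Nat.zero_xor]

lemma nkGrundy_union {s t : Finset V} (hd : Disjoint s t)
    (h : ∀ a ∈ s, ∀ b ∈ t, ¬ G.Adj a b) :
    nkGrundy G (s ∪ t) = nkGrundy G s ^^^ nkGrundy G t :=
  nkGrundy_union_aux G (s ∪ t).card s t le_rfl hd h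

end union
section basics
variable {V : Type*} [DecidableEq V] (G : SimpleGraph V) [DecidableRel G.Adj]

lemma nkGrundy_empty : nkGrundy G (∅ : Finset V) = 0 := by
  rw [nkGrundy_eq]; simp [mex]

lemma nkGrundy_singleton (v : V) : nkGrundy G ({v} : Finset V) = 1 := by
  rw [nkGrundy_eq]
  have h1 : nkMove G {v} v = ∅ := by
    ext w; simp [mem_nkMove]; tauto
  have : Finset.image (fun u => nkGrundy G (nkMove G {v} u)) {v} = {0} := by
    rw [Finset.image_singleton, h1, nkGrundy_empty]
  rw [this]
  apply mex_eq
  · simp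
  · intro m hm
    simp only [Finset.mem_singleton]
    omega

lemma nkGrundy_isolated (s : Finset V) (h : ∀ a ∈ s, ∀ b ∈ s, ¬ G.Adj a b) :
    nkGrundy G s = s.card % 2 := by
  induction s using Finset.induction with
  | empty => simp [nkGrundy_empty]
  | @insert a t ha ih =>
    have hins : insert a t = {a} ∪ t := by rw [Finset.insert_eq]
    rw [hins, nkGrundy_union G (by simpa using ha)
      (fun x hx b hb => h x (by simp [Finset.mem_singleton.mp hx]) b (by simp [hb]))]
    rw [nkGrundy_singleton, ih (fun x hx b hb => h x (by simp [hb, hx]) b (by simp [hb]))]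
    rw [← hins, Finset.card_insert_of_notMem ha, Nat.add_mod]
    rcases Nat.mod_two_eq_zero_or_one t.card with hc | hc <;> rw [hc] <;> decide

end basics

/-- Grundy value of the path on `m` vertices. -/
noncomputable def pG (m : ℕ) : ℕ := nkGrundy pathGraph (Finset.range m)
/-- Grundy value of `T_n ⊙_k`. -/
noncomputable def stG (n k : ℕ) : ℕ := nkGrundy (starTail n k) (Finset.range (n + k + 1))

lemma starTail_adj {n k a b : ℕ} : (starTail n k).Adj a b ↔ a ≠ b ∧
    (((a = 0 ∧ 1 ≤ b ∧ b ≤ n) ∨ (a = 0 ∧ b = n+1 ∧ 1 ≤ k) ∨ (n+1 ≤ a ∧ a < n+k ∧ b = a+1)) ∨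
     ((b = 0 ∧ 1 ≤ a ∧ a ≤ n) ∨ (b = 0 ∧ a = n+1 ∧ 1 ≤ k) ∨ (n+1 ≤ b ∧ b < n+k ∧ a = b+1))) := by
  simp [starTail, SimpleGraph.fromRel_adj]

lemma pathGraph_adj {a b : ℕ} : pathGraph.Adj a b ↔ a ≠ b ∧ (a + 1 = b ∨ b + 1 = a) := by
  simp [pathGraph, SimpleGraph.fromRel_adj]

/-- A segment `{c, …, c+m-1}` of the tail of `starTail n k` is a path `P_m`. -/
lemma segment_pG (n k c m : ℕ) (hc : n + 1 ≤ c) (hm : 1 ≤ m → c + m ≤ n + k + 1) :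
    nkGrundy (starTail n k) ((Finset.range m).image (· + c)) = pG m := by
  refine (nkGrundy_map pathGraph (starTail n k) (· + c) (Finset.range m) ?_ ?_).symm
  · intro x _ y _ h
    have h' : x + c = y + c := h
    omega
  · intro a ha b hb
    simp only [Finset.mem_coe, Finset.coe_range, Set.mem_Iio, Finset.mem_range] at ha hb
    show pathGraph.Adj a b ↔ (starTail n k).Adj (a + c) (b + c)
    rw [pathGraph_adj, starTail_adj]
    omega
section moves
variable (n k : ℕ)

lemma move_center (hk : 1 ≤ k) :
    nkGrundy (starTail n k) (nkMove (starTail n k) (Finset.range (n+k+1)) 0) = pG (k-1) := by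
  have hset : nkMove (starTail n k) (Finset.range (n+k+1)) 0
      = (Finset.range (k-1)).image (· + (n+2)) := by
    ext w
    simp only [mem_nkMove, Finset.mem_range, Finset.mem_image, starTail_adj, true_and, and_true, false_and, and_false]
    constructor
    · intro hw
      exact ⟨w - (n+2), by omega, by omega⟩
    · rintro ⟨x, hx, rfl⟩
      refine ⟨by omega, by omega, by omega⟩
  rw [hset]
  exact segment_pG n k (n+2) (k-1) (by omega) (by omega)

lemma move_leaf (hk : 1 ≤ k) (i : ℕ) (hi1 : 1 ≤ i) (hi2 : i ≤ n) :
    nkGrundy (starTail n k) (nkMove (starTail n k) (Finset.range (n+k+1)) i)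
      = (n-1) % 2 ^^^ pG k := by
  have hset : nkMove (starTail n k) (Finset.range (n+k+1)) i
      = ((Finset.range (n+1)).erase 0).erase i ∪ (Finset.range k).image (· + (n+1)) := by
    ext w
    simp only [mem_nkMove, Finset.mem_union, Finset.mem_erase, Finset.mem_range,
      Finset.mem_image, starTail_adj, true_and, and_true, false_and, and_false]
    constructor
    · intro hw
      rcases le_or_gt w n with h | h
      · exact Or.inl ⟨by omega, by omega, by omega⟩
      · exact Or.inr ⟨w - (n+1), by omega, by omega⟩
    · rintro (⟨h1, h2, h3⟩ | ⟨x, hx, rfl⟩) <;> exact ⟨by omega, by omega, by omega⟩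
  rw [hset]
  rw [nkGrundy_union _ ?disj ?nadj]
  case disj =>
    rw [Finset.disjoint_left]
    intro a ha hb
    simp only [Finset.mem_erase, Finset.mem_range] at ha
    simp only [Finset.mem_image, Finset.mem_range] at hb
    obtain ⟨x, hx, rfl⟩ := hb
    omega
  case nadj =>
    intro a ha b hb
    simp only [Finset.mem_erase, Finset.mem_range] at ha
    simp only [Finset.mem_image, Finset.mem_range] at hb
    obtain ⟨x, hx, rfl⟩ := hb
    rw [starTail_adj]
    omega
  rw [segment_pG n k (n+1) k (by omega) (by omega)]
  rw [nkGrundy_isolated]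
  · congr 2
    rw [Finset.card_erase_of_mem, Finset.card_erase_of_mem] <;>
      simp [Finset.mem_erase, Finset.mem_range] <;> omega
  · intro a ha b hb
    simp only [Finset.coe_erase, Set.mem_diff, Finset.mem_coe, Finset.mem_erase,
      Finset.mem_range, Set.mem_singleton_iff] at ha hb
    rw [starTail_adj]
    omega

lemma move_n1 (hk : 1 ≤ k) :
    nkGrundy (starTail n k) (nkMove (starTail n k) (Finset.range (n+k+1)) (n+1))
      = n % 2 ^^^ pG (k-2) := by
  have hset : nkMove (starTail n k) (Finset.range (n+k+1)) (n+1)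
      = (Finset.range (n+1)).erase 0 ∪ (Finset.range (k-2)).image (· + (n+3)) := by
    ext w
    simp only [mem_nkMove, Finset.mem_union, Finset.mem_erase, Finset.mem_range,
      Finset.mem_image, starTail_adj, true_and, and_true, false_and, and_false]
    constructor
    · intro hw
      rcases le_or_gt w n with h | h
      · exact Or.inl ⟨by omega, by omega⟩
      · exact Or.inr ⟨w - (n+3), by omega, by omega⟩
    · rintro (⟨h1, h2⟩ | ⟨x, hx, rfl⟩) <;> exact ⟨by omega, by omega, by omega⟩
  rw [hset]
  rw [nkGrundy_union _ ?disj ?nadj]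
  case disj =>
    rw [Finset.disjoint_left]
    intro a ha hb
    simp only [Finset.mem_erase, Finset.mem_range] at ha
    simp only [Finset.mem_image, Finset.mem_range] at hb
    obtain ⟨x, hx, rfl⟩ := hb
    omega
  case nadj =>
    intro a ha b hb
    simp only [Finset.mem_erase, Finset.mem_range] at ha
    simp only [Finset.mem_image, Finset.mem_range] at hb
    obtain ⟨x, hx, rfl⟩ := hb
    rw [starTail_adj]
    omega
  rw [segment_pG n k (n+3) (k-2) (by omega) (by omega)]
  rw [nkGrundy_isolated]
  · congr 2
    rw [Finset.card_erase_of_mem] <;> simp [Finset.mem_range]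
  · intro a ha b hb
    simp only [Finset.coe_erase, Set.mem_diff, Finset.mem_coe, Finset.mem_erase,
      Finset.mem_range, Set.mem_singleton_iff] at ha hb
    rw [starTail_adj]
    omega

lemma move_path (j : ℕ) (hj1 : 2 ≤ j) (hj2 : j ≤ k) :
    nkGrundy (starTail n k) (nkMove (starTail n k) (Finset.range (n+k+1)) (n+j))
      = stG n (j-2) ^^^ pG (k-j-1) := by
  have hset : nkMove (starTail n k) (Finset.range (n+k+1)) (n+j)
      = Finset.range (n+j-1) ∪ (Finset.range (k-j-1)).image (· + (n+j+2)) := by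
    ext w
    simp only [mem_nkMove, Finset.mem_union, Finset.mem_range,
      Finset.mem_image, starTail_adj, true_and, and_true, false_and, and_false]
    constructor
    · intro hw
      rcases le_or_gt w (n+j-1) with h | h
      · exact Or.inl (by omega)
      · exact Or.inr ⟨w - (n+j+2), by omega, by omega⟩
    · rintro (h | ⟨x, hx, rfl⟩) <;> exact ⟨by omega, by omega, by omega⟩
  rw [hset]
  rw [nkGrundy_union _ ?disj ?nadj]
  case disj =>
    rw [Finset.disjoint_left]
    intro a ha hb
    simp only [Finset.mem_range] at ha
    simp only [Finset.mem_image, Finset.mem_range] at hb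
    obtain ⟨x, hx, rfl⟩ := hb
    omega
  case nadj =>
    intro a ha b hb
    simp only [Finset.mem_coe, Finset.mem_range] at ha
    simp only [Finset.mem_coe, Finset.mem_image, Finset.mem_range] at hb
    obtain ⟨x, hx, rfl⟩ := hb
    rw [starTail_adj]
    omega
  rw [segment_pG n k (n+j+2) (k-j-1) (by omega) (by omega)]
  have hA : nkGrundy (starTail n k) (Finset.range (n+j-1)) = stG n (j-2) := by
    unfold stG
    have h1 : n + (j-2) + 1 = n + j - 1 := by omega
    rw [h1]
    have := nkGrundy_map (starTail n (j-2)) (starTail n k) id (Finset.range (n+j-1))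
      (Function.injective_id.injOn) ?adj
    · rw [Finset.image_id] at this
      exact this.symm
    case adj =>
      intro a ha b hb
      simp only [Finset.mem_coe, Finset.coe_range, Set.mem_Iio, Finset.mem_range] at ha hb
      simp only [id_eq]
      rw [starTail_adj, starTail_adj]
      omega
  rw [hA]

end moves
lemma mem_opts (n k : ℕ) (hn : 1 ≤ n) (hk : 1 ≤ k) (x : ℕ) :
    (x ∈ (Finset.range (n+k+1)).image fun v =>
        nkGrundy (starTail n k) (nkMove (starTail n k) (Finset.range (n+k+1)) v)) ↔
      (x = pG (k-1) ∨ x = (n-1) % 2 ^^^ pG k ∨ x = n % 2 ^^^ pG (k-2) ∨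
        ∃ j, 2 ≤ j ∧ j ≤ k ∧ x = stG n (j-2) ^^^ pG (k-j-1)) := by
  rw [Finset.mem_image]
  constructor
  · rintro ⟨v, hv, rfl⟩
    rw [Finset.mem_range] at hv
    rcases Nat.eq_zero_or_pos v with rfl | hv0
    · exact Or.inl (move_center n k hk)
    · rcases le_or_gt v n with hle | hgt
      · exact Or.inr (Or.inl (move_leaf n k hk v hv0 hle))
      · rcases eq_or_ne v (n+1) with rfl | hne
        · exact Or.inr (Or.inr (Or.inl (move_n1 n k hk)))
        · obtain ⟨j, rfl⟩ : ∃ j, v = n + j := ⟨v - n, by omega⟩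
          exact Or.inr (Or.inr (Or.inr ⟨j, by omega, by omega,
            move_path n k j (by omega) (by omega)⟩))
  · rintro (rfl | rfl | rfl | ⟨j, hj1, hj2, rfl⟩)
    · exact ⟨0, Finset.mem_range.mpr (by omega), move_center n k hk⟩
    · exact ⟨1, Finset.mem_range.mpr (by omega), move_leaf n k hk 1 le_rfl hn⟩
    · exact ⟨n+1, Finset.mem_range.mpr (by omega), move_n1 n k hk⟩
    · exact ⟨n+j, Finset.mem_range.mpr (by omega), move_path n k j hj1 hj2⟩

lemma mem_opts0 (n : ℕ) (hn : 1 ≤ n) (x : ℕ) :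
    (x ∈ (Finset.range (n+0+1)).image fun v =>
        nkGrundy (starTail n 0) (nkMove (starTail n 0) (Finset.range (n+0+1)) v)) ↔
      (x = 0 ∨ x = (n-1) % 2) := by
  have hcenter : nkMove (starTail n 0) (Finset.range (n+0+1)) 0 = ∅ := by
    ext w
    simp only [mem_nkMove, Finset.mem_range, starTail_adj, true_and, and_true,
      false_and, and_false, Finset.notMem_empty, iff_false]
    omega
  have hleaf : ∀ i, 1 ≤ i → i ≤ n →
      nkGrundy (starTail n 0) (nkMove (starTail n 0) (Finset.range (n+0+1)) i)
        = (n-1) % 2 := by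
    intro i hi1 hi2
    have hset : nkMove (starTail n 0) (Finset.range (n+0+1)) i
        = ((Finset.range (n+1)).erase 0).erase i := by
      ext w
      simp only [mem_nkMove, Finset.mem_range, starTail_adj, true_and, and_true,
        false_and, and_false, Finset.mem_erase]
      omega
    rw [hset, nkGrundy_isolated]
    · congr 1
      rw [Finset.card_erase_of_mem, Finset.card_erase_of_mem] <;>
        simp [Finset.mem_erase, Finset.mem_range] <;> omega
    · intro a ha b hb
      simp only [Finset.coe_erase, Set.mem_diff, Finset.mem_coe, Finset.mem_erase,
        Finset.mem_range, Set.mem_singleton_iff] at ha hb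
      rw [starTail_adj]
      omega
  rw [Finset.mem_image]
  constructor
  · rintro ⟨v, hv, rfl⟩
    rw [Finset.mem_range] at hv
    rcases Nat.eq_zero_or_pos v with rfl | hv0
    · rw [hcenter, nkGrundy_empty]
      exact Or.inl rfl
    · exact Or.inr (hleaf v hv0 (by omega))
  · rintro (rfl | rfl)
    · exact ⟨0, Finset.mem_range.mpr (by omega), by rw [hcenter, nkGrundy_empty]⟩
    · exact ⟨1, Finset.mem_range.mpr (by omega), hleaf 1 le_rfl hn⟩

lemma stG_red : ∀ k n, 3 ≤ n → stG n k = stG (n-2) k := by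
  intro k
  induction k using Nat.strong_induction_on with
  | _ k ih =>
    intro n hn
    rcases Nat.eq_zero_or_pos k with rfl | hk
    · unfold stG
      rw [nkGrundy_eq, nkGrundy_eq]
      congr 1
      ext x
      rw [mem_opts0 n (by omega), mem_opts0 (n-2) (by omega)]
      have h : (n-1) % 2 = (n-2-1) % 2 := by omega
      rw [h]
    · unfold stG
      rw [nkGrundy_eq, nkGrundy_eq]
      congr 1
      ext x
      rw [mem_opts n k (by omega) hk, mem_opts (n-2) k (by omega) hk]
      have h1 : (n-1) % 2 = (n-2-1) % 2 := by omega
      have h2 : n % 2 = (n-2) % 2 := by omega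
      rw [h1, h2]
      constructor
      · rintro (h | h | h | ⟨j, hj1, hj2, h⟩)
        · exact Or.inl h
        · exact Or.inr (Or.inl h)
        · exact Or.inr (Or.inr (Or.inl h))
        · rw [ih (j-2) (by omega) n hn] at h
          exact Or.inr (Or.inr (Or.inr ⟨j, hj1, hj2, h⟩))
      · rintro (h | h | h | ⟨j, hj1, hj2, h⟩)
        · exact Or.inl h
        · exact Or.inr (Or.inl h)
        · exact Or.inr (Or.inr (Or.inl h))
        · rw [← ih (j-2) (by omega) n hn] at h
          exact Or.inr (Or.inr (Or.inr ⟨j, hj1, hj2, h⟩))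

lemma stG_odd : ∀ n, 1 ≤ n → ∀ k, stG (2*n-1) k = stG 1 k := by
  intro n
  induction n with
  | zero => exact fun h => absurd h (by omega)
  | succ m ih =>
    intro _ k
    rcases Nat.eq_zero_or_pos m with rfl | hm
    · norm_num
    · have h := stG_red k (2*(m+1)-1) (by omega)
      have e : 2*(m+1)-1-2 = 2*m-1 := by omega
      rw [h, e]
      exact ih hm k

lemma stG_even : ∀ n, 1 ≤ n → ∀ k, stG (2*n) k = stG 2 k := by
  intro n
  induction n with
  | zero => exact fun h => absurd h (by omega)
  | succ m ih =>
    intro _ k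
    rcases Nat.eq_zero_or_pos m with rfl | hm
    · norm_num
    · have h := stG_red k (2*(m+1)) (by omega)
      have e : 2*(m+1)-2 = 2*m := by omega
      rw [h, e]
      exact ih hm k

lemma stG_one (k : ℕ) (hk : 1 ≤ k) : stG 1 k = pG (k+2) := by
  unfold stG pG
  have h1 : 1 + k + 1 = k + 2 := by omega
  rw [h1]
  have key := nkGrundy_map pathGraph (starTail 1 k)
    (fun x => if x = 0 then 1 else if x = 1 then 0 else x) (Finset.range (k+2)) ?inj ?adj
  case inj =>
    intro x _ y _ h
    simp only at h
    split_ifs at h <;> omega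
  case adj =>
    intro a ha b hb
    simp only [Finset.mem_coe, Finset.coe_range, Set.mem_Iio, Finset.mem_range] at ha hb
    show pathGraph.Adj a b ↔ (starTail 1 k).Adj
      (if a = 0 then 1 else if a = 1 then 0 else a)
      (if b = 0 then 1 else if b = 1 then 0 else b)
    rw [pathGraph_adj, starTail_adj]
    split_ifs <;> (try simp only [false_and, and_false, true_and, and_true,
      false_or, or_false, true_or, or_true]) <;> (try omega)
  have himg : (Finset.range (k+2)).image
      (fun x => if x = 0 then 1 else if x = 1 then 0 else x) = Finset.range (k+2) := by
    ext w
    simp only [Finset.mem_image, Finset.mem_range]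
    constructor
    · rintro ⟨y, hy, rfl⟩
      by_cases h0 : y = 0 <;> by_cases h1 : y = 1 <;> simp [h0, h1] <;> omega
    · intro hw
      by_cases h0 : w = 0
      · exact ⟨1, by omega, by simp [h0]⟩
      · by_cases h1 : w = 1
        · exact ⟨0, by omega, by simp [h1]⟩
        · exact ⟨w, hw, by simp [h0, h1]⟩
  rw [himg] at key
  exact key.symm
/-- For all positive `n, k`:
`𝒢(T_{2n-1} ⊙_k) = 𝒢(T_{1} ⊙_k) = 𝒢(P_{k+2})` and
`𝒢(T_{2n} ⊙_k) = 𝒢(T_{2} ⊙_k)`. -/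
theorem nkGrundy_starTail_parity (n k : ℕ) (hn : 1 ≤ n) (hk : 1 ≤ k) :
    (nkGrundy (starTail (2 * n - 1) k) (Finset.range ((2 * n - 1) + k + 1)) =
        nkGrundy (starTail 1 k) (Finset.range (1 + k + 1)) ∧
      nkGrundy (starTail 1 k) (Finset.range (1 + k + 1)) =
        nkGrundy pathGraph (Finset.range (k + 2))) ∧
    nkGrundy (starTail (2 * n) k) (Finset.range (2 * n + k + 1)) =
      nkGrundy (starTail 2 k) (Finset.range (2 + k + 1)) := by

  refine ⟨⟨?_, ?_⟩, ?_⟩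
  · exact stG_odd n hn k
  · exact stG_one k hk
  · exact stG_even n hn k
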